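/- Fix n ≥ 1, rates λ_1, ..., λ_n > 0 and λ_obs > 0, and μ ∈ [0,1], and define for each K ⊆ {1,...,n}: P_ME(∅) = λ_obs / (λ_obs + Σ_i λ_i); for |K| = 1 with K = {k}, P_ME(K) = [λ_k / (λ_obs + Σ_i λ_i)] · [λ_obs + μ(Σ_i λ_i − λ_k)] / (λ_obs + Σ_i λ_i − λ_k); and for |K| ≥ 2, P_ME(K) = (1−μ) · Σ_{(i_1,...,i_{|K|}) ∈ S_K} [λ_obs / (λ_obs + Σ_{i ∉ K} λ_i)] · Π_{j=1}^{|K|} [λ_{i_j} / (Σ_{l=j}^{|K|} λ_{i_l} + λ_obs + Σ_{i ∉ K} λ_i)], where S_K is the set of all permutations of K. Then Σ_{K ⊆ {1,...,n}} P_ME(K) = 1. -/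

import Mathlib

open MeasureTheory ProbabilityTheory Finset

/-- For a list of indices `(i_1, …, i_m)` (an ordering of the altered genes) and a constant
`C = λ_obs + ∑_{i ∉ K} λ_i`, the product `∏_{j=1}^m λ_{i_j} / (∑_{l=j}^m λ_{i_l} + C)`. -/
noncomputable def ordProd {n : ℕ} (lam : Fin n → ℝ) (C : ℝ) : List (Fin n) → ℝ
  | [] => 1
  | i :: rest => lam i / (((i :: rest).map lam).sum + C) * ordProd lam C rest


lemma mem_perms_iff {n : ℕ} (K : Finset (Fin n)) (l : List (Fin n)) :
    l ∈ (K.sort (· ≤ ·)).permutations ↔ (l : Multiset (Fin n)) = K.val := by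
  rw [List.mem_permutations, ← Multiset.coe_eq_coe, Finset.sort_eq]

lemma sum_map_of_mem_perms {n : ℕ} {K : Finset (Fin n)} {l : List (Fin n)}
    (h : l ∈ (K.sort (· ≤ ·)).permutations) (lam : Fin n → ℝ) :
    (l.map lam).sum = ∑ i ∈ K, lam i := by
  rw [mem_perms_iff] at h
  have : ((l : Multiset (Fin n)).map lam).sum = (K.val.map lam).sum := by rw [h]
  simpa using this

lemma perms_decomp {n : ℕ} (K : Finset (Fin n)) (hK : K.Nonempty) :
    ((K.sort (· ≤ ·)).permutations).toFinset
      = K.biUnion (fun k => (((K.erase k).sort (· ≤ ·)).permutations).toFinset.image (k :: ·)) := by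
  ext l
  simp only [List.mem_toFinset, mem_perms_iff, Finset.mem_biUnion, Finset.mem_image]
  constructor
  · intro h
    cases l with
    | nil => exact absurd h.symm (Finset.nonempty_iff_ne_empty.mp hK ∘ Finset.val_eq_zero.mp ∘ (by simp_all))
    | cons k l' =>
      have hk : k ∈ K := by
        have : k ∈ (k ::ₘ (l' : Multiset (Fin n))) := Multiset.mem_cons_self _ _
        rw [show ((k :: l' : List (Fin n)) : Multiset (Fin n)) = k ::ₘ (l' : Multiset (Fin n)) from rfl] at h
        rw [h] at this; exact this
      refine ⟨k, hk, l', ?_, rfl⟩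
      have : (l' : Multiset (Fin n)) = (k ::ₘ (l' : Multiset (Fin n))).erase k := by
        simp
      rw [this, show ((k :: l' : List (Fin n)) : Multiset (Fin n)) = k ::ₘ (l' : Multiset (Fin n)) from rfl] at *
      rw [h, Finset.erase_val]
  · rintro ⟨k, hk, l', hl', rfl⟩
    rw [show ((k :: l' : List (Fin n)) : Multiset (Fin n)) = k ::ₘ (l' : Multiset (Fin n)) from rfl, hl',
      Finset.erase_val, Multiset.cons_erase (by simpa using hk)]

lemma perm_sum_decomp {n : ℕ} (K : Finset (Fin n)) (hK : K.Nonempty) (f : List (Fin n) → ℝ) :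
    (((K.sort (· ≤ ·)).permutations).map f).sum
      = ∑ k ∈ K, ((((K.erase k).sort (· ≤ ·)).permutations).map (fun l => f (k :: l))).sum := by
  rw [← List.sum_toFinset f (List.nodup_permutations _ (Finset.sort_nodup K _)), perms_decomp K hK,
    Finset.sum_biUnion]
  · refine Finset.sum_congr rfl fun k _ => ?_
    rw [Finset.sum_image (by intro a _ b _ h; simpa using h)]
    rw [List.sum_toFinset _ (List.nodup_permutations _ (Finset.sort_nodup _ _))]
  · intro a _ b _ hab
    simp only [Finset.disjoint_left, Finset.mem_image]
    rintro l ⟨x, _, rfl⟩ ⟨y, _, h⟩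
    exact hab (by injection h with h1; rw [h1])

lemma Q_eq_one {n : ℕ} (lam : Fin n → ℝ) (b : ℝ) (hlam : ∀ i, 0 < lam i) (hb : 0 < b)
    (A : Finset (Fin n)) :
    ∑ K ∈ A.powerset, (((K.sort (· ≤ ·)).permutations).map
      (fun l => (b / (b + ∑ i ∈ A \ K, lam i)) * ordProd lam (b + ∑ i ∈ A \ K, lam i) l)).sum
      = 1 := by
  induction A using Finset.strongInduction with
  | _ A ih =>
    have hsumnn : ∀ B : Finset (Fin n), (0:ℝ) ≤ ∑ i ∈ B, lam i :=
      fun B => Finset.sum_nonneg fun i _ => (hlam i).le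
    set R : ℝ := b + ∑ i ∈ A, lam i with hR
    have hRpos : 0 < R := add_pos_of_pos_of_nonneg hb (hsumnn A)
    rw [← Finset.add_sum_erase _ _ (Finset.empty_mem_powerset A)]
    have hempty : ((((∅ : Finset (Fin n)).sort (· ≤ ·)).permutations).map
        (fun l => (b / (b + ∑ i ∈ A \ ∅, lam i)) * ordProd lam (b + ∑ i ∈ A \ ∅, lam i) l)).sum
        = b / R := by
      simp [Finset.sort_empty, ordProd, hR]
    rw [hempty]
    have hmain : ∑ K ∈ (A.powerset).erase ∅,
        (((K.sort (· ≤ ·)).permutations).map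
          (fun l => (b / (b + ∑ i ∈ A \ K, lam i)) * ordProd lam (b + ∑ i ∈ A \ K, lam i) l)).sum
        = ∑ k ∈ A, lam k / R := by
      have hstep : ∀ K ∈ (A.powerset).erase ∅,
          (((K.sort (· ≤ ·)).permutations).map
            (fun l => (b / (b + ∑ i ∈ A \ K, lam i)) * ordProd lam (b + ∑ i ∈ A \ K, lam i) l)).sum
          = ∑ k ∈ A, (if k ∈ K then (lam k / R) *
              ((((K.erase k).sort (· ≤ ·)).permutations).map
                (fun l => (b / (b + ∑ i ∈ (A.erase k) \ (K.erase k), lam i)) *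
                  ordProd lam (b + ∑ i ∈ (A.erase k) \ (K.erase k), lam i) l)).sum else 0) := by
        intro K hKmem
        obtain ⟨hKne, hKsub⟩ : K ≠ ∅ ∧ K ⊆ A := by
          simpa [Finset.mem_erase, Finset.mem_powerset] using hKmem
        have hKnonempty : K.Nonempty := Finset.nonempty_iff_ne_empty.mpr hKne
        rw [perm_sum_decomp K hKnonempty, Finset.sum_ite_mem,
          Finset.inter_eq_right.mpr hKsub]
        refine Finset.sum_congr rfl fun k hk => ?_
        have hAK : A \ K = (A.erase k) \ (K.erase k) := by
          ext i
          simp only [Finset.mem_sdiff, Finset.mem_erase]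
          constructor
          · rintro ⟨h1, h2⟩
            exact ⟨⟨fun h => h2 (h ▸ hk), h1⟩, fun h => h2 h.2⟩
          · rintro ⟨⟨h0, h1⟩, h2⟩
            exact ⟨h1, fun h => h2 ⟨h0, h⟩⟩
        rw [← hAK]
        have hmap : List.map
              (fun l => (b / (b + ∑ i ∈ A \ K, lam i)) *
                ordProd lam (b + ∑ i ∈ A \ K, lam i) (k :: l))
              (((K.erase k).sort (· ≤ ·)).permutations)
            = List.map
              (fun l => lam k / R * ((b / (b + ∑ i ∈ A \ K, lam i)) *
                ordProd lam (b + ∑ i ∈ A \ K, lam i) l))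
              (((K.erase k).sort (· ≤ ·)).permutations) := by
          refine List.map_congr_left (fun l hl => ?_)
          have hmem : (l.map lam).sum = ∑ i ∈ K.erase k, lam i :=
            sum_map_of_mem_perms hl lam
          have hden : ((k :: l).map lam).sum + (b + ∑ i ∈ A \ K, lam i) = R := by
            have h1 : ((k :: l).map lam).sum = ∑ i ∈ K, lam i := by
              rw [List.map_cons, List.sum_cons, hmem, Finset.add_sum_erase _ _ hk]
            rw [h1, hR]
            have := Finset.sum_sdiff (f := lam) hKsub
            linarith
          show (b / (b + ∑ i ∈ A \ K, lam i)) *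
              (lam k / (((k :: l).map lam).sum + (b + ∑ i ∈ A \ K, lam i)) *
                ordProd lam (b + ∑ i ∈ A \ K, lam i) l) = _
          rw [hden]
          ring
        rw [hmap, List.sum_map_mul_left]
      rw [Finset.sum_congr rfl hstep, Finset.sum_comm]
      refine Finset.sum_congr rfl fun k hkA => ?_
      rw [← Finset.sum_filter]
      have hfilt : ((A.powerset).erase ∅).filter (fun K => k ∈ K)
          = (A.powerset).filter (fun K => k ∈ K) := by
        ext K
        simp only [Finset.mem_filter, Finset.mem_erase, Finset.mem_powerset]
        exact ⟨fun h => ⟨h.1.2, h.2⟩, fun h => ⟨⟨Finset.ne_empty_of_mem h.2, h.1⟩, h.2⟩⟩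
      rw [hfilt, ← Finset.mul_sum]
      have hbij : ∑ K ∈ (A.powerset).filter (fun K => k ∈ K),
          ((((K.erase k).sort (· ≤ ·)).permutations).map
            (fun l => (b / (b + ∑ i ∈ (A.erase k) \ (K.erase k), lam i)) *
              ordProd lam (b + ∑ i ∈ (A.erase k) \ (K.erase k), lam i) l)).sum
          = ∑ K' ∈ (A.erase k).powerset,
          (((K'.sort (· ≤ ·)).permutations).map
            (fun l => (b / (b + ∑ i ∈ (A.erase k) \ K', lam i)) *
              ordProd lam (b + ∑ i ∈ (A.erase k) \ K', lam i) l)).sum := by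
        refine Finset.sum_nbij' (fun K => K.erase k) (fun K' => insert k K') ?_ ?_ ?_ ?_ ?_
        · intro K hK
          simp only [Finset.mem_filter, Finset.mem_powerset] at hK
          exact Finset.mem_powerset.mpr (Finset.erase_subset_erase k hK.1)
        · intro K' hK'
          simp only [Finset.mem_powerset] at hK'
          refine Finset.mem_filter.mpr ⟨Finset.mem_powerset.mpr ?_, Finset.mem_insert_self k K'⟩
          exact Finset.insert_subset hkA (hK'.trans (Finset.erase_subset k A))
        · intro K hK
          simp only [Finset.mem_filter] at hK
          exact Finset.insert_erase hK.2
        · intro K' hK'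
          simp only [Finset.mem_powerset] at hK'
          exact Finset.erase_insert (fun h => (Finset.mem_erase.mp (hK' h)).1 rfl)
        · intro K hK; rfl
      rw [hbij, ih (A.erase k) (Finset.erase_ssubset hkA), mul_one]
    rw [hmain, ← Finset.sum_div, ← add_div]
    field_simp
    exact hR.symm

/-- The TiMEx null-model probability of the genotype `g_K`:
`P(g_K | θ_Null) = ∑_{(i_1,…,i_|K|) ∈ S_K} [λ_obs / (λ_obs + ∑_{i ∉ K} λ_i)] ·
∏_{j=1}^{|K|} λ_{i_j} / (∑_{l=j}^{|K|} λ_{i_l} + λ_obs + ∑_{i ∉ K} λ_i)`,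
where `S_K` is the set of all permutations of `K` (for `K = ∅` this equals
`λ_obs / (λ_obs + ∑_i λ_i)`). -/
noncomputable def nullProb {n : ℕ} (lam : Fin n → ℝ) (lobs : ℝ) (K : Finset (Fin n)) : ℝ :=
  (((K.sort (· ≤ ·)).permutations).map
    (fun l => (lobs / (lobs + ∑ i ∈ Kᶜ, lam i)) *
      ordProd lam (lobs + ∑ i ∈ Kᶜ, lam i) l)).sum
/-- The TiMEx mutual-exclusivity-model probability of the genotype `g_K`, for degree of
mutual exclusivity `μ`: `P(∅) = λ_obs / (λ_obs + ∑_i λ_i)`; for `K = {k}`,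
`P(K) = [λ_k / (λ_obs + ∑_i λ_i)] · [λ_obs + μ(∑_i λ_i − λ_k)] / (λ_obs + ∑_i λ_i − λ_k)`;
and for `|K| ≥ 2`, `P(K) = (1 − μ) · P(g_K | θ_Null)`. -/
noncomputable def meProb {n : ℕ} (lam : Fin n → ℝ) (lobs mu : ℝ) (K : Finset (Fin n)) : ℝ :=
  if K.card = 0 then lobs / (lobs + ∑ i, lam i)
  else if K.card = 1 then
    ∑ k ∈ K, (lam k / (lobs + ∑ i, lam i)) *
      ((lobs + mu * ((∑ i, lam i) - lam k)) / (lobs + (∑ i, lam i) - lam k))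
  else (1 - mu) * nullProb lam lobs K


lemma null_sum {n : ℕ} (lam : Fin n → ℝ) (lobs : ℝ)
    (hlam : ∀ i, 0 < lam i) (hlobs : 0 < lobs) :
    ∑ K : Finset (Fin n), nullProb lam lobs K = 1 := by
  have h := Q_eq_one lam lobs hlam hlobs Finset.univ
  rw [← Finset.powerset_univ]
  rw [← h]
  refine Finset.sum_congr rfl fun K _ => ?_
  simp only [nullProb, Finset.compl_eq_univ_sdiff]

lemma meProb_eq {n : ℕ} (lam : Fin n → ℝ) (lobs mu : ℝ)
    (hlam : ∀ i, 0 < lam i) (hlobs : 0 < lobs) (K : Finset (Fin n)) :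
    meProb lam lobs mu K = (1 - mu) * nullProb lam lobs K
      + (if K = ∅ then mu * (lobs / (lobs + ∑ i, lam i)) else 0)
      + ∑ k ∈ K, (if K = {k} then mu * (lam k / (lobs + ∑ i, lam i)) else 0) := by
  have hsumnn : ∀ B : Finset (Fin n), (0:ℝ) ≤ ∑ i ∈ B, lam i :=
    fun B => Finset.sum_nonneg fun i _ => (hlam i).le
  have hT : (0:ℝ) < lobs + ∑ i, lam i := add_pos_of_pos_of_nonneg hlobs (hsumnn _)
  rcases Nat.lt_or_ge K.card 2 with hc | hc
  · interval_cases h : K.card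
    · -- K = ∅
      have hK : K = ∅ := Finset.card_eq_zero.mp h
      subst hK
      have hnull : nullProb lam lobs (∅ : Finset (Fin n)) = lobs / (lobs + ∑ i, lam i) := by
        simp [nullProb, Finset.sort_empty, ordProd]
      simp only [meProb, Finset.card_empty, if_pos rfl, hnull]
      simp
      ring
    · -- K = {k}
      obtain ⟨k, hK⟩ := Finset.card_eq_one.mp h
      subst hK
      have hcompl : ∑ i ∈ ({k} : Finset (Fin n))ᶜ, lam i = (∑ i, lam i) - lam k := by
        have := Finset.sum_compl_add_sum ({k} : Finset (Fin n)) lam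
        simp only [Finset.sum_singleton] at this
        linarith
      have hnull : nullProb lam lobs ({k} : Finset (Fin n))
          = (lobs / (lobs + ((∑ i, lam i) - lam k))) * (lam k / (lobs + ∑ i, lam i)) := by
        simp only [nullProb, hcompl]
        rw [Finset.sort_singleton,
          show [k].permutations = [[k]] by
            simp [List.permutations, List.permutationsAux_cons, List.permutationsAux_nil,
              List.permutationsAux2]]
        simp only [ordProd, List.map_cons, List.map_nil, List.sum_cons, List.sum_nil]
        ring
      have hpos : (0:ℝ) < lobs + ((∑ i, lam i) - lam k) := by
        have := hsumnn ({k} : Finset (Fin n))ᶜ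
        rw [hcompl] at this
        linarith
      simp only [meProb, Finset.card_singleton, if_neg one_ne_zero, if_pos rfl, hnull,
        Finset.sum_singleton, if_neg (Finset.singleton_ne_empty k), if_pos rfl, add_zero,
        eq_self_iff_true, if_true]
      have hD : lobs + ((∑ i, lam i) - lam k) ≠ 0 := ne_of_gt hpos
      have e1 : lobs + (∑ i, lam i) - lam k = lobs + ((∑ i, lam i) - lam k) := by ring
      have e2 : lobs + mu * ((∑ i, lam i) - lam k)
          = (1 - mu) * lobs + mu * (lobs + ((∑ i, lam i) - lam k)) := by ring
      rw [e1, e2, add_div, mul_div_assoc, mul_div_assoc, div_self hD]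
      ring
  · -- |K| ≥ 2
    have h0 : K.card ≠ 0 := by omega
    have h1 : K.card ≠ 1 := by omega
    have hne : K ≠ ∅ := fun h => h0 (by simp [h])
    simp only [meProb, if_neg h0, if_neg h1, if_neg hne]
    have : ∀ k ∈ K, (if K = {k} then mu * (lam k / (lobs + ∑ i, lam i)) else 0) = 0 := by
      intro k hk
      rw [if_neg]
      intro h
      rw [h] at h1
      simp at h1
    rw [Finset.sum_congr rfl this]
    simp

/-- the TiMEx mutual-exclusivity-model genotype probabilities form a
probability distribution on the subsets `K ⊆ {1,…,n}`. -/
theorem timex_me_model_sums_to_one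
    (n : ℕ) (hn : 1 ≤ n) (lam : Fin n → ℝ) (lobs : ℝ)
    (hlam : ∀ i, 0 < lam i) (hlobs : 0 < lobs)
    (mu : ℝ) (hmu : mu ∈ Set.Icc (0 : ℝ) 1) :
    ∑ K : Finset (Fin n), meProb lam lobs mu K = 1 := by
  have hsumnn : ∀ B : Finset (Fin n), (0:ℝ) ≤ ∑ i ∈ B, lam i :=
    fun B => Finset.sum_nonneg fun i _ => (hlam i).le
  have hT : (0:ℝ) < lobs + ∑ i, lam i := add_pos_of_pos_of_nonneg hlobs (hsumnn _)
  have hrw : ∀ K : Finset (Fin n), meProb lam lobs mu K = (1 - mu) * nullProb lam lobs K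
      + (if K = ∅ then mu * (lobs / (lobs + ∑ i, lam i)) else 0)
      + ∑ k ∈ K, (if K = {k} then mu * (lam k / (lobs + ∑ i, lam i)) else 0) :=
    fun K => meProb_eq lam lobs mu hlam hlobs K
  rw [Finset.sum_congr rfl (fun K _ => hrw K)]
  rw [Finset.sum_add_distrib, Finset.sum_add_distrib, ← Finset.mul_sum,
    null_sum lam lobs hlam hlobs, mul_one]
  have h2 : ∑ K : Finset (Fin n), (if K = ∅ then mu * (lobs / (lobs + ∑ i, lam i)) else 0)
      = mu * (lobs / (lobs + ∑ i, lam i)) := by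
    rw [Finset.sum_ite_eq' Finset.univ (∅ : Finset (Fin n))
      (fun _ => mu * (lobs / (lobs + ∑ i, lam i)))]
    simp
  have h3 : ∑ K : Finset (Fin n), ∑ k ∈ K,
      (if K = {k} then mu * (lam k / (lobs + ∑ i, lam i)) else 0)
      = ∑ k : Fin n, mu * (lam k / (lobs + ∑ i, lam i)) := by
    have hext : ∀ K : Finset (Fin n),
        ∑ k ∈ K, (if K = {k} then mu * (lam k / (lobs + ∑ i, lam i)) else 0)
        = ∑ k : Fin n, (if K = {k} then mu * (lam k / (lobs + ∑ i, lam i)) else 0) := by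
      intro K
      refine Finset.sum_subset (Finset.subset_univ K) ?_
      intro k _ hk
      rw [if_neg]
      intro h
      exact hk (h ▸ Finset.mem_singleton_self k)
    rw [Finset.sum_congr rfl (fun K _ => hext K), Finset.sum_comm]
    refine Finset.sum_congr rfl fun k _ => ?_
    rw [Finset.sum_ite_eq' Finset.univ ({k} : Finset (Fin n))
      (fun K => mu * (lam k / (lobs + ∑ i, lam i)))]
    simp
  rw [h2, h3, ← Finset.mul_sum, ← Finset.sum_div]
  field_simp
  ring
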